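/- Assume the following form of Lehmer's Conjecture: there is a real number μ > 1 such that every monic polynomial p with integer coefficients having a complex root that is not a root of unity satisfies M(p) ≥ μ, where M(p) is the product over the complex roots z of p (with multiplicity) of max(1, |z|). Let N ≥ 2 be a natural number and let λ be a real number with λ > 1 that is integral over ℤ and satisfies λ^(2N−2) < μ. Suppose λ is a root of some nonzero polynomial q with integer coefficients having at most N nonzero coefficients, and that every complex root of the minimal polynomial of λ over ℚ has modulus at most λ. Then the minimal polynomial of λ over ℚ has a complex root ζ with nonzero imaginary part and |ζ| > 1. -/

import Mathlib

open Polynomial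

-- Step lemma: distinct nonzero real roots of f ≤ distinct nonzero real roots of f' + 2
private lemma roots_step (f : ℝ[X]) :
    (f.roots.toFinset.filter (· ≠ 0)).card ≤
      ((derivative f).roots.toFinset.filter (· ≠ 0)).card + 2 := by
  rcases eq_or_ne (derivative f) 0 with hf' | hf'
  · rw [f.eq_C_of_derivative_eq_zero hf', roots_C]
    simp
  have hf : f ≠ 0 := fun h => hf' (by simp [h])
  have h1 : (f.roots.toFinset.filter (· ≠ 0)).card ≤
      ((derivative f).roots.toFinset \ f.roots.toFinset.filter (· ≠ 0)).card + 1 := by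
    refine Finset.card_le_diff_of_interleaved fun x hx y hy hxy _ => ?_
    simp only [Finset.mem_filter, Multiset.mem_toFinset, mem_roots hf] at hx hy
    obtain ⟨z, hz1, hz2⟩ := exists_deriv_eq_zero hxy f.continuousOn (hx.1.trans hy.1.symm)
    exact ⟨z, by rwa [Multiset.mem_toFinset, mem_roots hf', IsRoot, ← f.deriv], hz1⟩
  have h2 : ((derivative f).roots.toFinset \ f.roots.toFinset.filter (· ≠ 0)).card ≤
      (derivative f).roots.toFinset.card := Finset.card_le_card (Finset.sdiff_subset)
  have h3 : (derivative f).roots.toFinset.card ≤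
      ((derivative f).roots.toFinset.filter (· ≠ 0)).card + 1 := by
    have hsplit := Finset.card_filter_add_card_filter_not
      (s := (derivative f).roots.toFinset) (p := (· ≠ 0))
    have hle : ((derivative f).roots.toFinset.filter (fun x => ¬ x ≠ 0)).card ≤ 1 := by
      refine Finset.card_le_one.2 fun a ha b hb => ?_
      simp only [Finset.mem_filter, not_not] at ha hb
      rw [ha.2, hb.2]
    omega
  omega

private lemma supp_deriv (f : ℝ[X]) (h0 : f.coeff 0 ≠ 0) :
    (derivative f).support.card + 1 ≤ f.support.card := by
  have hsub : (derivative f).support.image (· + 1) ⊆ f.support.erase 0 := by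
    intro n hn
    simp only [Finset.mem_image] at hn
    obtain ⟨m, hm, rfl⟩ := hn
    rw [mem_support_iff, coeff_derivative] at hm
    exact Finset.mem_erase.2 ⟨by omega, mem_support_iff.2 fun h => hm (by simp [h])⟩
  have hc := Finset.card_le_card hsub
  rw [Finset.card_image_of_injective _ (add_left_injective 1)] at hc
  have h0' : (0 : ℕ) ∈ f.support := mem_support_iff.2 h0
  have h1 := Finset.card_erase_of_mem h0'
  have h2 : 0 < f.support.card := Finset.card_pos.2 ⟨0, h0'⟩
  omega

private lemma supp_X_mul (g : ℝ[X]) : (X * g).support.card = g.support.card := by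
  have : (X * g).support = g.support.image (· + 1) := by
    ext m
    cases m with
    | zero => simp [mul_coeff_zero]
    | succ k => simp [coeff_X_mul]
  rw [this, Finset.card_image_of_injective _ (add_left_injective 1)]

private lemma descartes_aux (n : ℕ) : ∀ f : ℝ[X], f.natDegree ≤ n → f ≠ 0 →
    (f.roots.toFinset.filter (· ≠ 0)).card + 2 ≤ 2 * f.support.card := by
  induction n using Nat.strong_induction_on with
  | _ n ih =>
    intro f hdeg hf
    rcases eq_or_ne (derivative f) 0 with hf' | hf'
    · have hc := f.eq_C_of_derivative_eq_zero hf'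
      have hc0 : f.coeff 0 ≠ 0 := fun h => hf (by rw [hc, h, map_zero])
      rw [hc, roots_C, support_C hc0]
      simp
    have hnd : f.natDegree ≠ 0 := by
      intro h
      obtain ⟨a, ha⟩ := natDegree_eq_zero.1 h
      exact hf' (by rw [← ha, derivative_C])
    rcases eq_or_ne (f.coeff 0) 0 with h0 | h0
    · -- f = X * divX f
      have hXd : X * f.divX = f := by
        have := X_mul_divX_add f
        rwa [h0, map_zero, add_zero] at this
      have hdvx : f.divX ≠ 0 := fun h => hf (by rw [← hXd, h, mul_zero])
      have hlt : f.divX.natDegree < n := by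
        have := natDegree_divX_eq_natDegree_tsub_one (p := f)
        omega
      have hihd := ih f.divX.natDegree hlt f.divX le_rfl hdvx
      have hroots : f.roots = ({0} : Multiset ℝ) + f.divX.roots := by
        conv_lhs => rw [← hXd]
        rw [roots_mul (by rw [hXd]; exact hf), roots_X]
      have hfil : f.roots.toFinset.filter (· ≠ 0) =
          f.divX.roots.toFinset.filter (· ≠ 0) := by
        rw [hroots]
        ext x
        simp only [Finset.mem_filter, Multiset.toFinset_add, Finset.mem_union,
          Multiset.mem_toFinset, Multiset.mem_singleton]
        constructor
        · rintro ⟨h1 | h1, h2⟩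
          · exact absurd h1 h2
          · exact ⟨h1, h2⟩
        · rintro ⟨h1, h2⟩; exact ⟨Or.inr h1, h2⟩
      have hsc : f.support.card = f.divX.support.card := by
        conv_lhs => rw [← hXd]
        exact supp_X_mul _
      rw [hfil, hsc]
      exact hihd
    · have hlt : (derivative f).natDegree < n := lt_of_lt_of_le (natDegree_derivative_lt hnd) hdeg
      have hd0 := ih (derivative f).natDegree hlt (derivative f) le_rfl hf'
      have := roots_step f
      have := supp_deriv f h0
      omega

/-- A nonzero real polynomial with `k` nonzero coefficients has at most `2k - 2` distinct
nonzero real roots. -/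
private lemma descartes (f : ℝ[X]) (hf : f ≠ 0) :
    (f.roots.toFinset.filter (· ≠ 0)).card + 2 ≤ 2 * f.support.card :=
  descartes_aux f.natDegree f le_rfl hf

set_option maxHeartbeats 2000000 in
theorem stmt_9 (μ : ℝ) (hμ : 1 < μ)
    (lehmer : ∀ p : ℤ[X], p.Monic →
      (∃ z : ℂ, (p.map (Int.castRingHom ℂ)).IsRoot z ∧ ¬ ∃ n : ℕ, 0 < n ∧ z ^ n = 1) →
      μ ≤ (((p.map (Int.castRingHom ℂ)).roots).map (fun z => max 1 (‖z‖))).prod)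
    (N : ℕ) (hN : 2 ≤ N) (lam : ℝ) (hlam : 1 < lam)
    (hint : IsIntegral ℤ lam)
    (hsmall : lam ^ (2 * N - 2) < μ)
    (q : ℤ[X]) (hq : q ≠ 0) (hqN : q.support.card ≤ N)
    (hqlam : Polynomial.aeval lam q = 0)
    (hconj : ∀ z : ℂ, ((minpoly ℚ lam).map (algebraMap ℚ ℂ)).IsRoot z →
      ‖z‖ ≤ lam) :
    ∃ ζ : ℂ, ((minpoly ℚ lam).map (algebraMap ℚ ℂ)).IsRoot ζ ∧
      ζ.im ≠ 0 ∧ 1 < ‖ζ‖ := by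
  by_contra hcon
  push_neg at hcon
  set p := minpoly ℤ lam with hp
  set P := minpoly ℚ lam with hPdef
  have hPQ : P = p.map (algebraMap ℤ ℚ) :=
    minpoly.isIntegrallyClosed_eq_field_fractions' ℚ hint
  have hmapeq : P.map (algebraMap ℚ ℂ) = p.map (Int.castRingHom ℂ) := by
    rw [hPQ, map_map]
    congr 1
  -- lam as complex root of p
  have hmapRC : (p.map (Int.castRingHom ℝ)).map (algebraMap ℝ ℂ) = p.map (Int.castRingHom ℂ) := by
    rw [map_map]
    congr 1
  have hlamroot : (p.map (Int.castRingHom ℂ)).IsRoot (lam : ℂ) := by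
    have h1 : Polynomial.eval lam (p.map (Int.castRingHom ℝ)) = 0 := by
      have := minpoly.aeval ℤ lam
      rwa [Polynomial.aeval_def, ← Polynomial.eval_map] at this
    rw [IsRoot, ← hmapRC, Polynomial.eval_map, ← Complex.coe_algebraMap,
      Polynomial.eval₂_at_apply (algebraMap ℝ ℂ) lam, h1, map_zero]
  have hnotunity : ¬ ∃ n : ℕ, 0 < n ∧ (lam : ℂ) ^ n = 1 := by
    rintro ⟨n, hn, hpow⟩
    have : (lam : ℝ) ^ n = 1 := by
      have := congrArg Complex.re hpow
      rw [← Complex.ofReal_pow] at hpow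
      exact_mod_cast hpow
    nlinarith [one_lt_pow₀ hlam (by omega : n ≠ 0)]
  have hμle := lehmer p (minpoly.monic hint) ⟨(lam : ℂ), hlamroot, hnotunity⟩
  -- roots of p over ℂ form a nodup multiset
  have hQint : IsIntegral ℚ lam := hint.tower_top
  have hsep : P.Separable := (minpoly.irreducible hQint).separable
  have hsepC : (P.map (algebraMap ℚ ℂ)).Separable := hsep.map
  have hnodup : (p.map (Int.castRingHom ℂ)).roots.Nodup := by
    rw [← hmapeq]; exact Polynomial.nodup_roots hsepC
  set R := (p.map (Int.castRingHom ℂ)).roots with hR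
  set F := R.toFinset with hF
  have hval : F.val = R := Multiset.dedup_eq_self.2 hnodup
  -- q over ℝ
  set qR := q.map (Int.castRingHom ℝ) with hqR
  have hqR0 : qR ≠ 0 := (Polynomial.map_ne_zero_iff (f := Int.castRingHom ℝ) Int.cast_injective).2 hq
  -- every root of P over ℂ is a root of q over ℂ
  have hPdvd : P ∣ q.map (algebraMap ℤ ℚ) := by
    apply minpoly.dvd
    rw [Polynomial.aeval_map_algebraMap]
    exact hqlam
  -- elements of F with big modulus are real and give nonzero real roots of qR
  set F1 := F.filter (fun z => 1 < ‖z‖) with hF1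
  have hreal : ∀ ζ ∈ F1, ζ = ((ζ.re : ℝ) : ℂ) ∧ (ζ.re ≠ 0) ∧ qR.IsRoot ζ.re := by
    intro ζ hζ
    simp only [hF1, Finset.mem_filter, hF, Multiset.mem_toFinset] at hζ
    obtain ⟨hζR, hζabs⟩ := hζ
    have hroot : (P.map (algebraMap ℚ ℂ)).IsRoot ζ := by
      rw [hmapeq]
      exact (mem_roots (by
        rw [← hmapeq]
        exact Polynomial.map_ne_zero (minpoly.ne_zero hQint))).1 hζR
    have him : ζ.im = 0 := by
      by_contra him
      exact absurd hζabs (not_lt.2 (hcon ζ hroot him))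
    have hζeq : ζ = ((ζ.re : ℝ) : ℂ) := Complex.ext rfl (by simp [him])
    have hre0 : ζ.re ≠ 0 := by
      intro h
      rw [hζeq, h] at hζabs
      simp at hζabs
      exact absurd hζabs (by norm_num)
    -- ζ is a root of q over ℂ
    have hqroot : (q.map (Int.castRingHom ℂ)).IsRoot ζ := by
      have hdvdC : P.map (algebraMap ℚ ℂ) ∣ q.map (Int.castRingHom ℂ) := by
        have := Polynomial.map_dvd (algebraMap ℚ ℂ) hPdvd
        rwa [map_map, (by exact Subsingleton.elim _ _ :
          (algebraMap ℚ ℂ).comp (algebraMap ℤ ℚ) = Int.castRingHom ℂ)] at this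
      exact hroot.dvd hdvdC
    -- transfer to ℝ
    have hmapR : qR.map (algebraMap ℝ ℂ) = q.map (Int.castRingHom ℂ) := by
      rw [hqR, map_map]
      congr 1
    have : qR.IsRoot ζ.re := by
      have h1 : Polynomial.eval ζ (qR.map (algebraMap ℝ ℂ)) = 0 := by
        rw [hmapR]; exact hqroot
      rw [hζeq] at h1
      rw [Polynomial.eval_map, ← Complex.coe_algebraMap] at h1
      have h2 := Polynomial.eval₂_at_apply (algebraMap ℝ ℂ) ζ.re (p := qR)
      rw [h2, Complex.coe_algebraMap, Complex.ofReal_eq_zero] at h1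
      exact h1
    exact ⟨hζeq, hre0, this⟩
  -- card bound via descartes
  have hcard : F1.card ≤ 2 * N - 2 := by
    have hinj : ∀ ζ₁ ∈ F1, ∀ ζ₂ ∈ F1, ζ₁.re = ζ₂.re → ζ₁ = ζ₂ := by
      intro a ha b hb hab
      rw [(hreal a ha).1, (hreal b hb).1, hab]
    have hmapsub : F1.image (fun ζ => ζ.re) ⊆ qR.roots.toFinset.filter (· ≠ 0) := by
      intro r hr
      simp only [Finset.mem_image] at hr
      obtain ⟨ζ, hζ, rfl⟩ := hr
      obtain ⟨_, h2, h3⟩ := hreal ζ hζ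
      simp only [Finset.mem_filter, Multiset.mem_toFinset, mem_roots hqR0]
      exact ⟨h3, h2⟩
    have h1 : F1.card = (F1.image (fun ζ => ζ.re)).card :=
      (Finset.card_image_of_injOn hinj).symm
    have h2 := Finset.card_le_card hmapsub
    have h3 := descartes qR hqR0
    have h4 : qR.support.card ≤ N :=
      le_trans (Finset.card_le_card (Polynomial.support_map_subset _ _)) hqN
    omega
  -- product bound
  have hprodeq : (R.map (fun z => max 1 (‖z‖))).prod =
      ∏ z ∈ F, max 1 (‖z‖) := by
    rw [Finset.prod, hval]
  have hsplit : ∏ z ∈ F, max 1 (‖z‖) =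
      (∏ z ∈ F1, max 1 (‖z‖)) *
        ∏ z ∈ F.filter (fun z => ¬ 1 < ‖z‖), max 1 (‖z‖) :=
    (Finset.prod_filter_mul_prod_filter_not F _ _).symm
  have hsecond : ∏ z ∈ F.filter (fun z => ¬ 1 < ‖z‖), max 1 (‖z‖) = 1 := by
    apply Finset.prod_eq_one
    intro z hz
    simp only [Finset.mem_filter, not_lt] at hz
    exact max_eq_left hz.2
  have hfirst : ∏ z ∈ F1, max 1 (‖z‖) ≤ lam ^ F1.card := by
    rw [← Finset.prod_const]
    apply Finset.prod_le_prod
    · intro z _; positivity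
    · intro z hz
      simp only [hF1, Finset.mem_filter, hF, Multiset.mem_toFinset] at hz
      have habs : ‖z‖ ≤ lam := by
        apply hconj
        rw [hmapeq]
        exact (mem_roots (by
          rw [← hmapeq]
          exact Polynomial.map_ne_zero (minpoly.ne_zero hQint))).1 hz.1
      exact max_le (le_of_lt hlam) habs
  have hpowle : lam ^ F1.card ≤ lam ^ (2 * N - 2) :=
    pow_le_pow_right₀ (le_of_lt hlam) hcard
  have : μ ≤ lam ^ (2 * N - 2) := by
    calc μ ≤ (R.map (fun z => max 1 (‖z‖))).prod := hμle
    _ = ∏ z ∈ F, max 1 (‖z‖) := hprodeq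
    _ = (∏ z ∈ F1, max 1 (‖z‖)) * 1 := by rw [hsplit, hsecond]
    _ = ∏ z ∈ F1, max 1 (‖z‖) := mul_one _
    _ ≤ lam ^ F1.card := hfirst
    _ ≤ lam ^ (2 * N - 2) := hpowle
  linarith
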